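/- arXiv:2506.12521 — 2 statements merged into one kernel-verified Lean document; each statement's English description precedes it below -/
import Mathlib

section
/- Let A and ⟨0⟩ be C-hyperideals of a commutative multiplicative hyperring G and S an MCS with A ∩ S = ∅. If A is a weakly quasi S-primary hyperideal of G that is not a quasi S-primary hyperideal of G, then rad(A) = rad(⟨0⟩). -/
open Set

/-- A commutative multiplicative hyperring: a commutative additive group with a
commutative, associative hyperoperation `hmul` satisfying `(-a)∘b = -(a∘b)`,
weak distributivity, and having an identity element `e` with `a ∈ e∘a`. -/
class MulHyperring (G : Type*) extends AddCommGroup G where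
  hmul : G → G → Set G
  hmul_nonempty : ∀ a b : G, (hmul a b).Nonempty
  hmul_comm : ∀ a b : G, hmul a b = hmul b a
  hmul_assoc : ∀ a b c : G, (⋃ x ∈ hmul a b, hmul x c) = ⋃ x ∈ hmul b c, hmul a x
  neg_hmul : ∀ a b : G, hmul (-a) b = (fun x => -x) '' (hmul a b)
  hmul_add : ∀ a b c : G,
    hmul a (b + c) ⊆ {x | ∃ u ∈ hmul a b, ∃ v ∈ hmul a c, x = u + v}
  e : G
  e_mem : ∀ a : G, a ∈ hmul e a

namespace MulHyperring

variable {G : Type*} [MulHyperring G]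

/-- Hyperproduct of an element with a set: `a ∘ B = ⋃ b ∈ B, a ∘ b`. -/
def smulSet (a : G) (B : Set G) : Set G := ⋃ b ∈ B, hmul a b

/-- Hyperproduct of two sets. -/
def setMul (A B : Set G) : Set G := ⋃ a ∈ A, ⋃ b ∈ B, hmul a b

/-- Hyperproduct `a₁ ∘ a₂ ∘ ⋯ ∘ aₙ` of a (nonempty) list of elements. -/
def hProd : List G → Set G
  | [] => ∅
  | [a] => {a}
  | a :: b :: l => smulSet a (hProd (b :: l))

/-- `aⁿ` as a hyperproduct. -/
def hPow (a : G) (n : ℕ) : Set G := hProd (List.replicate n a)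

/-- `A` is a hyperideal of `G`. -/
def IsHyperideal (A : Set G) : Prop :=
  A.Nonempty ∧ (∀ x ∈ A, ∀ y ∈ A, x - y ∈ A) ∧ ∀ r : G, ∀ x ∈ A, hmul r x ⊆ A

/-- `A` is a `C`-hyperideal: any finite hyperproduct meeting `A` is contained in `A`. -/
def IsCHyperideal (A : Set G) : Prop :=
  IsHyperideal A ∧ ∀ l : List G, l ≠ [] → (hProd l ∩ A).Nonempty → hProd l ⊆ A

/-- The radical of a (C-)hyperideal: `{a | aⁿ ⊆ A for some n ≥ 1}`. -/
def rad (A : Set G) : Set G := {a | ∃ n : ℕ, 1 ≤ n ∧ hPow a n ⊆ A}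

/-- The hyperideal generated by a set. -/
def idealGen (X : Set G) : Set G := ⋂₀ {A | IsHyperideal A ∧ X ⊆ A}

/-- The hyperideal product of two hyperideals. -/
def idealMul (A B : Set G) : Set G := idealGen (setMul A B)

/-- Multiplicative closed subset. -/
def IsMCS (S : Set G) : Prop :=
  e ∈ S ∧ ∀ s₁ ∈ S, ∀ s₂ ∈ S, (hmul s₁ s₂ ∩ S).Nonempty

/-- Prime hyperideal. -/
def IsPrime (P : Set G) : Prop :=
  IsHyperideal P ∧ P ≠ univ ∧ ∀ x y : G, hmul x y ⊆ P → x ∈ P ∨ y ∈ P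

/-- `S`-prime hyperideal. -/
def IsSPrime (S A : Set G) : Prop :=
  IsHyperideal A ∧ A ∩ S = ∅ ∧
    ∃ t ∈ S, ∀ u v : G, hmul u v ⊆ A → hmul t u ⊆ A ∨ hmul t v ⊆ A

/-- `S`-primary hyperideal. -/
def IsSPrimary (S A : Set G) : Prop :=
  IsHyperideal A ∧ A ∩ S = ∅ ∧
    ∃ t ∈ S, ∀ u v : G, hmul u v ⊆ A → hmul t u ⊆ A ∨ hmul t v ⊆ rad A

/-- Quasi `S`-primary hyperideal. -/
def IsQuasiSPrimary (S A : Set G) : Prop :=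
  IsHyperideal A ∧ A ∩ S = ∅ ∧
    ∃ t ∈ S, ∀ u v : G, hmul u v ⊆ A → hmul t u ⊆ rad A ∨ hmul t v ⊆ rad A

/-- Weakly quasi `S`-primary hyperideal. -/
def IsWeaklyQuasiSPrimary (S A : Set G) : Prop :=
  IsHyperideal A ∧ A ∩ S = ∅ ∧
    ∃ t ∈ S, ∀ u v : G, 0 ∉ hmul u v → hmul u v ⊆ A →
      hmul t u ⊆ rad A ∨ hmul t v ⊆ rad A

/-- Strongly quasi `S`-primary hyperideal. -/
def IsStronglyQuasiSPrimary (S A : Set G) : Prop :=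
  IsHyperideal A ∧ A ∩ S = ∅ ∧
    ∃ t ∈ S, ∀ u v : G, hmul u v ⊆ A →
      smulSet t (hPow u 2) ⊆ A ∨ hmul t v ⊆ rad A

/-- The residual `(B : x) = {y | y ∘ x ⊆ B}`. -/
def colon (B : Set G) (x : G) : Set G := {y | hmul y x ⊆ B}

end MulHyperring

namespace MulHyperring

variable {G : Type*} [MulHyperring G]

lemma ideal_zero_mem {A : Set G} (h : IsHyperideal A) : (0 : G) ∈ A := by
  obtain ⟨x, hx⟩ := h.1
  simpa using h.2.1 x hx x hx

lemma ideal_neg_mem {A : Set G} (h : IsHyperideal A) {x : G} (hx : x ∈ A) : -x ∈ A := by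
  simpa using h.2.1 0 (ideal_zero_mem h) x hx

lemma ideal_add_mem {A : Set G} (h : IsHyperideal A) {x y : G} (hx : x ∈ A) (hy : y ∈ A) :
    x + y ∈ A := by
  simpa [sub_neg_eq_add] using h.2.1 x hx (-y) (ideal_neg_mem h hy)

lemma hProd_pair (u v : G) : hProd [u, v] = hmul u v := by
  simp [hProd, smulSet]

lemma cideal_hmul_subset {B : Set G} (hB : IsCHyperideal B) {u v : G}
    (h : (hmul u v ∩ B).Nonempty) : hmul u v ⊆ B := by
  have := hB.2 [u, v] (by simp) (by rwa [hProd_pair])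
  rwa [hProd_pair] at this

lemma hPow_one (a : G) : hPow a 1 = {a} := by simp [hPow, hProd]

lemma hPow_succ_succ (a : G) (m : ℕ) :
    hPow a (m + 2) = smulSet a (hPow a (m + 1)) := by
  simp [hPow, List.replicate_succ, hProd]

lemma rad_add_mem {A : Set G} (hA : IsHyperideal A) {a b : G}
    (ha : a ∈ rad A) (hb : b ∈ A) : a + b ∈ rad A := by
  have key : ∀ n : ℕ, 1 ≤ n →
      hPow (a + b) n ⊆ {z | ∃ x ∈ hPow a n, ∃ y ∈ A, z = x + y} := by
    intro n hn
    induction n with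
    | zero => omega
    | succ m ih =>
      rcases Nat.lt_or_ge m 1 with h1 | h1
      · have hm : m = 0 := by omega
        subst hm
        intro z hz
        rw [hPow_one] at hz
        refine ⟨a, by rw [hPow_one]; rfl, b, hb, ?_⟩
        simpa using hz
      · obtain ⟨k, rfl⟩ : ∃ k, m = k + 1 := ⟨m - 1, by omega⟩
        intro z hz
        rw [hPow_succ_succ] at hz
        simp only [smulSet, Set.mem_iUnion, exists_prop] at hz
        obtain ⟨w, hw, hzw⟩ := hz
        obtain ⟨x, hx, y, hy, rfl⟩ := ih h1 hw
        obtain ⟨p, hp, q, hq, rfl⟩ := hmul_add (a + b) x y hzw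
        have hqA : q ∈ A := hA.2.2 (a + b) y hy hq
        rw [hmul_comm] at hp
        obtain ⟨s, hs, r, hr, rfl⟩ := hmul_add x a b hp
        have hrA : r ∈ A := hA.2.2 x b hb hr
        refine ⟨s, ?_, r + q, ideal_add_mem hA hrA hqA, by abel⟩
        rw [hPow_succ_succ]
        simp only [smulSet, Set.mem_iUnion, exists_prop]
        exact ⟨x, hx, by rwa [hmul_comm]⟩
  obtain ⟨n, hn, hp⟩ := ha
  refine ⟨n, hn, fun z hz => ?_⟩
  obtain ⟨x, hx, y, hy, rfl⟩ := key n hn hz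
  exact ideal_add_mem hA (hp hx) hy

lemma hProd_append (l1 l2 : List G) (h1 : l1 ≠ []) (h2 : l2 ≠ []) :
    hProd (l1 ++ l2) ⊆ setMul (hProd l1) (hProd l2) := by
  revert h1
  induction l1 with
  | nil => intro h1; exact absurd rfl h1
  | cons a l ih =>
    intro _
    cases l with
    | nil =>
      cases l2 with
      | nil => exact absurd rfl h2
      | cons b l2' =>
        intro z hz
        simp only [List.singleton_append, hProd, smulSet, Set.mem_iUnion, exists_prop] at hz
        obtain ⟨w, hw, hzw⟩ := hz
        simp only [setMul, hProd, Set.mem_iUnion, exists_prop, Set.mem_singleton_iff]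
        exact ⟨a, rfl, w, hw, hzw⟩
    | cons b l' =>
      intro z hz
      have hz' : z ∈ smulSet a (hProd ((b :: l') ++ l2)) := hz
      simp only [smulSet, Set.mem_iUnion, exists_prop] at hz'
      obtain ⟨w, hw, hzw⟩ := hz'
      have hw' := ih (by simp) hw
      simp only [setMul, Set.mem_iUnion, exists_prop] at hw'
      obtain ⟨p, hp, q, hq, hwpq⟩ := hw'
      have hassoc := hmul_assoc a p q
      have hz2 : z ∈ ⋃ x ∈ hmul p q, hmul a x := by
        simp only [Set.mem_iUnion, exists_prop]
        exact ⟨w, hwpq, hzw⟩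
      rw [← hassoc] at hz2
      simp only [Set.mem_iUnion, exists_prop] at hz2
      obtain ⟨y, hy, hzy⟩ := hz2
      simp only [setMul, Set.mem_iUnion, exists_prop]
      refine ⟨y, ?_, q, hq, hzy⟩
      show y ∈ hProd (a :: b :: l')
      simp only [hProd, smulSet, Set.mem_iUnion, exists_prop]
      exact ⟨p, hp, hy⟩

end MulHyperring

open MulHyperring in
theorem weaklyQuasiSPrimary_not_quasi_rad_eq {G : Type*} [MulHyperring G] (A S : Set G) (hA : IsCHyperideal A)
    (hS : IsMCS S) (hAS : A ∩ S = ∅)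
    (h0C : IsCHyperideal (idealGen {0} : Set G))
    (hw : IsWeaklyQuasiSPrimary S A) (hnq : ¬ IsQuasiSPrimary S A) :
    rad A = rad (idealGen {0} : Set G) := by
  classical
  set Z : Set G := idealGen {0} with hZdef
  obtain ⟨hAi, -, t, htS, hweak⟩ := hw
  have hZi : IsHyperideal Z := h0C.1
  have h0A : (0 : G) ∈ A := ideal_zero_mem hA.1
  have h0Z : (0 : G) ∈ Z := fun B hB => hB.2 rfl
  have hZA : Z ⊆ A := Set.sInter_subset_of_mem ⟨hA.1, by simpa using h0A⟩
  -- extract a bad pair from non-quasi-S-primariness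
  have hex : ∃ u v : G, hmul u v ⊆ A ∧ ¬ hmul t u ⊆ rad A ∧ ¬ hmul t v ⊆ rad A := by
    by_contra hc
    push_neg at hc
    exact hnq ⟨hA.1, hAS, t, htS, fun u v huv =>
      or_iff_not_imp_left.mpr (hc u v huv)⟩
  obtain ⟨u, v, huvA, hu, hv⟩ := hex
  have h0uv : (0 : G) ∈ hmul u v := by
    by_contra h0
    rcases hweak u v h0 huvA with h | h
    exacts [hu h, hv h]
  have huvZ : hmul u v ⊆ Z := cideal_hmul_subset h0C ⟨0, h0uv, h0Z⟩
  -- key claim: for any bad pair (u', v'), u' annihilates A into Z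
  have key : ∀ u' v' : G, hmul u' v' ⊆ A → hmul u' v' ⊆ Z →
      ¬ hmul t u' ⊆ rad A → ¬ hmul t v' ⊆ rad A → ∀ a ∈ A, hmul u' a ⊆ Z := by
    intro u' v' hA' hZ' hu' hv' a haA
    by_contra hna
    have hdisj : ∀ x ∈ hmul u' a, x ∉ Z := fun x hx hxZ =>
      hna (cideal_hmul_subset h0C ⟨x, hx, hxZ⟩)
    have h0' : (0 : G) ∉ hmul u' (v' + a) := by
      intro h0
      obtain ⟨x, hx, y, hy, hxy⟩ := hmul_add u' v' a h0
      have hyZ : y ∈ Z := by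
        have : y = -x := eq_neg_of_add_eq_zero_right hxy.symm
        rw [this]
        exact ideal_neg_mem hZi (hZ' hx)
      exact hdisj y hy hyZ
    have hsub : hmul u' (v' + a) ⊆ A := by
      intro z hz
      obtain ⟨x, hx, y, hy, rfl⟩ := hmul_add u' v' a hz
      exact ideal_add_mem hA.1 (hA' hx) (hA.1.2.2 u' a haA hy)
    rcases hweak u' (v' + a) h0' hsub with h | h
    · exact hu' h
    · apply hv'
      intro z hz
      have hz' : z ∈ hmul t ((v' + a) + (-a)) := by
        rwa [add_neg_cancel_right]
      obtain ⟨x, hx, y, hy, rfl⟩ := hmul_add t (v' + a) (-a) hz'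
      have hyA : y ∈ A := by
        rw [hmul_comm, neg_hmul] at hy
        obtain ⟨w, hw, rfl⟩ := hy
        rw [hmul_comm] at hw
        exact ideal_neg_mem hA.1 (hA.1.2.2 t a haA hw)
      exact rad_add_mem hA.1 (h hx) hyA
  have keyU : ∀ a ∈ A, hmul u a ⊆ Z := key u v huvA huvZ hu hv
  have keyV : ∀ a ∈ A, hmul v a ⊆ Z :=
    key v u (by rwa [hmul_comm]) (by rwa [hmul_comm]) hv hu
  -- claim: A ∘ A ⊆ Z
  have claim2 : ∀ p ∈ A, ∀ q ∈ A, hmul p q ⊆ Z := by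
    intro p hp q hq
    have h0' : (0 : G) ∈ hmul (u + p) (v + q) := by
      by_contra h0
      have hsub : hmul (u + p) (v + q) ⊆ A := by
        intro z hz
        rw [hmul_comm] at hz
        obtain ⟨x, hx, y, hy, rfl⟩ := hmul_add (v + q) u p hz
        have hxA : x ∈ A := by
          rw [hmul_comm] at hx
          obtain ⟨s, hs, r, hr, rfl⟩ := hmul_add u v q hx
          exact ideal_add_mem hA.1 (huvA hs) (hA.1.2.2 u q hq hr)
        exact ideal_add_mem hA.1 hxA (hA.1.2.2 (v + q) p hp hy)
      rcases hweak (u + p) (v + q) h0 hsub with h | h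
      · apply hu
        intro z hz
        have hz' : z ∈ hmul t ((u + p) + (-p)) := by rwa [add_neg_cancel_right]
        obtain ⟨x, hx, y, hy, rfl⟩ := hmul_add t (u + p) (-p) hz'
        have hyA : y ∈ A := by
          rw [hmul_comm, neg_hmul] at hy
          obtain ⟨w, hw, rfl⟩ := hy
          rw [hmul_comm] at hw
          exact ideal_neg_mem hA.1 (hA.1.2.2 t p hp hw)
        exact rad_add_mem hA.1 (h hx) hyA
      · apply hv
        intro z hz
        have hz' : z ∈ hmul t ((v + q) + (-q)) := by rwa [add_neg_cancel_right]
        obtain ⟨x, hx, y, hy, rfl⟩ := hmul_add t (v + q) (-q) hz'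
        have hyA : y ∈ A := by
          rw [hmul_comm, neg_hmul] at hy
          obtain ⟨w, hw, rfl⟩ := hy
          rw [hmul_comm] at hw
          exact ideal_neg_mem hA.1 (hA.1.2.2 t q hq hw)
        exact rad_add_mem hA.1 (h hx) hyA
    obtain ⟨x1, hx1, x2, hx2, h0eq⟩ := hmul_add (u + p) v q h0'
    rw [hmul_comm] at hx1
    obtain ⟨y1, hy1, y2, hy2, rfl⟩ := hmul_add v u p hx1
    rw [hmul_comm] at hx2
    obtain ⟨y3, hy3, y4, hy4, rfl⟩ := hmul_add q u p hx2
    have hy1Z : y1 ∈ Z := huvZ (by rwa [hmul_comm] at hy1)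
    have hy2Z : y2 ∈ Z := keyV p hp hy2
    have hy3Z : y3 ∈ Z := keyU q hq (by rwa [hmul_comm] at hy3)
    have hy4pq : y4 ∈ hmul p q := by rwa [hmul_comm] at hy4
    have hsum : ((y1 + y2) + y3) + y4 = 0 := by
      have := h0eq.symm
      rw [add_assoc]
      exact this
    have hy4Z : y4 ∈ Z := by
      have : y4 = -((y1 + y2) + y3) := eq_neg_of_add_eq_zero_right hsum
      rw [this]
      exact ideal_neg_mem hZi (ideal_add_mem hZi (ideal_add_mem hZi hy1Z hy2Z) hy3Z)
    exact cideal_hmul_subset h0C ⟨y4, hy4pq, hy4Z⟩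
  -- conclude
  apply Set.Subset.antisymm
  · rintro a ⟨n, hn, hpow⟩
    refine ⟨n + n, by omega, ?_⟩
    have happ : hPow a (n + n) ⊆ setMul (hPow a n) (hPow a n) := by
      have h1 : List.replicate n a ≠ ([] : List G) := by
        cases n with
        | zero => omega
        | succ m => simp [List.replicate_succ]
      have := hProd_append (List.replicate n a) (List.replicate n a) h1 h1
      simpa only [hPow, List.replicate_add] using this
    intro z hz
    have hz' := happ hz
    simp only [setMul, Set.mem_iUnion, exists_prop] at hz'
    obtain ⟨p, hpmem, q, hqmem, hzpq⟩ := hz'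
    exact claim2 p (hpow hpmem) q (hpow hqmem) hzpq
  · rintro a ⟨n, hn, hpow⟩
    exact ⟨n, hn, hpow.trans hZA⟩
end

section
/- Let A₁, A₂ be C-hyperideals of commutative multiplicative hyperrings G₁, G₂ respectively, and S₁, S₂ multiplicative closed subsets of G₁, G₂. Then A₁ × A₂ is a strongly quasi (S₁ × S₂)-primary hyperideal of G₁ × G₂ if and only if either A₂ is a strongly quasi S₂-primary hyperideal of G₂ and S₁ ∩ A₁ ≠ ∅, or A₁ is a strongly quasi S₁-primary hyperideal of G₁ and S₂ ∩ A₂ ≠ ∅. -/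
open Set

namespace MulHyperring

variable {G₁ G₂ : Type*} [MulHyperring G₁] [MulHyperring G₂]

/-- The product of two commutative multiplicative hyperrings. -/
instance prodMulHyperring : MulHyperring (G₁ × G₂) where
  hmul a b := (hmul a.1 b.1) ×ˢ (hmul a.2 b.2)
  hmul_nonempty a b := (hmul_nonempty a.1 b.1).prod (hmul_nonempty a.2 b.2)
  hmul_comm a b := by rw [hmul_comm a.1 b.1, hmul_comm a.2 b.2]
  hmul_assoc a b c := by
    ext x
    have h₁ := Set.ext_iff.mp (hmul_assoc a.1 b.1 c.1) x.1
    have h₂ := Set.ext_iff.mp (hmul_assoc a.2 b.2 c.2) x.2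
    simp only [Set.mem_iUnion, Set.mem_prod, exists_prop] at *
    constructor
    · rintro ⟨y, ⟨hy1, hy2⟩, hx1, hx2⟩
      obtain ⟨z₁, hz₁, hz₁'⟩ := h₁.mp ⟨y.1, hy1, hx1⟩
      obtain ⟨z₂, hz₂, hz₂'⟩ := h₂.mp ⟨y.2, hy2, hx2⟩
      exact ⟨(z₁, z₂), ⟨hz₁, hz₂⟩, hz₁', hz₂'⟩
    · rintro ⟨y, ⟨hy1, hy2⟩, hx1, hx2⟩
      obtain ⟨z₁, hz₁, hz₁'⟩ := h₁.mpr ⟨y.1, hy1, hx1⟩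
      obtain ⟨z₂, hz₂, hz₂'⟩ := h₂.mpr ⟨y.2, hy2, hx2⟩
      exact ⟨(z₁, z₂), ⟨hz₁, hz₂⟩, hz₁', hz₂'⟩
  neg_hmul a b := by
    ext x
    have h₁ := Set.ext_iff.mp (neg_hmul a.1 b.1) x.1
    have h₂ := Set.ext_iff.mp (neg_hmul a.2 b.2) x.2
    simp only [Set.mem_prod, Set.mem_image, Prod.fst_neg, Prod.snd_neg] at *
    constructor
    · rintro ⟨hx1, hx2⟩
      obtain ⟨u₁, hu₁, hu₁'⟩ := h₁.mp hx1
      obtain ⟨u₂, hu₂, hu₂'⟩ := h₂.mp hx2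
      exact ⟨(u₁, u₂), ⟨hu₁, hu₂⟩, Prod.ext hu₁' hu₂'⟩
    · rintro ⟨u, ⟨hu1, hu2⟩, hux⟩
      subst hux
      exact ⟨h₁.mpr ⟨u.1, hu1, rfl⟩, h₂.mpr ⟨u.2, hu2, rfl⟩⟩
  hmul_add a b c := by
    rintro ⟨x₁, x₂⟩ ⟨hx1, hx2⟩
    obtain ⟨u₁, hu₁, v₁, hv₁, h₁⟩ := hmul_add a.1 b.1 c.1 hx1
    obtain ⟨u₂, hu₂, v₂, hv₂, h₂⟩ := hmul_add a.2 b.2 c.2 hx2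
    exact ⟨(u₁, u₂), ⟨hu₁, hu₂⟩, (v₁, v₂), ⟨hv₁, hv₂⟩, Prod.ext h₁ h₂⟩
  e := (e, e)
  e_mem a := ⟨e_mem a.1, e_mem a.2⟩

end MulHyperring

namespace MulHyperring

section Aux

variable {G : Type*} [MulHyperring G]

lemma hProd_nonempty : ∀ l : List G, l ≠ [] → (hProd l).Nonempty
  | [a], _ => ⟨a, rfl⟩
  | a :: b :: l, _ => by
    obtain ⟨x, hx⟩ := hProd_nonempty (b :: l) (by simp)
    obtain ⟨y, hy⟩ := hmul_nonempty a x
    exact ⟨y, Set.mem_biUnion hx hy⟩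

lemma hPow_nonempty (a : G) {n : ℕ} (hn : 1 ≤ n) : (hPow a n).Nonempty :=
  hProd_nonempty _ (by simp [List.replicate_eq_nil_iff]; omega)

lemma hPow_succ (a : G) (n : ℕ) (hn : 1 ≤ n) : hPow a (n + 1) = smulSet a (hPow a n) := by
  cases n with
  | zero => omega
  | succ k => rfl

lemma mem_smulSet {a : G} {B : Set G} {x : G} :
    x ∈ smulSet a B ↔ ∃ b ∈ B, x ∈ hmul a b := by
  simp [smulSet]

lemma smulSet_nonempty (a : G) {B : Set G} (hB : B.Nonempty) : (smulSet a B).Nonempty := by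
  obtain ⟨b, hb⟩ := hB
  obtain ⟨x, hx⟩ := hmul_nonempty a b
  exact ⟨x, mem_smulSet.mpr ⟨b, hb, hx⟩⟩

lemma zero_mem_ideal {A : Set G} (hA : IsHyperideal A) : (0 : G) ∈ A := by
  obtain ⟨a, ha⟩ := hA.1
  have := hA.2.1 a ha a ha
  simpa using this

lemma hmul_subset_of_left_mem {A : Set G} (hA : IsHyperideal A) {a : G} (ha : a ∈ A) (r : G) :
    hmul a r ⊆ A := by
  rw [hmul_comm]
  exact hA.2.2 r a ha

lemma smulSet_subset_of_mem {A : Set G} (hA : IsHyperideal A) {a : G} (ha : a ∈ A) (B : Set G) :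
    smulSet a B ⊆ A := by
  intro x hx
  obtain ⟨b, _, hb⟩ := mem_smulSet.mp hx
  exact hmul_subset_of_left_mem hA ha b hb

lemma hPow_subset_mono {A : Set G} (hA : IsHyperideal A) {a : G} {n m : ℕ}
    (h1 : 1 ≤ n) (hnm : n ≤ m) (h : hPow a n ⊆ A) : hPow a m ⊆ A := by
  induction m with
  | zero => omega
  | succ k ih =>
    rcases Nat.lt_or_ge n (k + 1) with hlt | hge
    · have hk1 : 1 ≤ k := by omega
      have hk : hPow a k ⊆ A := ih (by omega)
      rw [hPow_succ a k hk1]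
      intro x hx
      obtain ⟨b, hb, hxb⟩ := mem_smulSet.mp hx
      exact hA.2.2 a b (hk hb) hxb
    · have : n = k + 1 := by omega
      subst this
      exact h

lemma subset_rad {A : Set G} : A ⊆ rad A := fun a ha =>
  ⟨1, le_refl 1, by rw [hPow_one]; simpa using ha⟩

lemma mcs_pow {S : Set G} (hS : IsMCS S) {s : G} (hs : s ∈ S) :
    ∀ n : ℕ, 1 ≤ n → (hPow s n ∩ S).Nonempty := by
  intro n hn
  induction n with
  | zero => omega
  | succ k ih =>
    cases Nat.eq_zero_or_pos k with
    | inl h0 => subst h0; exact ⟨s, by rw [hPow_one]; exact rfl, hs⟩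
    | inr hk =>
      obtain ⟨x, hx, hxS⟩ := ih hk
      obtain ⟨y, hy, hyS⟩ := hS.2 s hs x hxS
      refine ⟨y, ?_, hyS⟩
      rw [hPow_succ s k hk]
      exact mem_smulSet.mpr ⟨x, hx, hy⟩

end Aux

section Prod

variable {G₁ G₂ : Type*} [MulHyperring G₁] [MulHyperring G₂]

lemma prod_hmul (p q : G₁ × G₂) :
    hmul p q = (hmul p.1 q.1) ×ˢ (hmul p.2 q.2) := rfl

lemma prod_e : (e : G₁ × G₂) = (e, e) := rfl

lemma smulSet_prod (a : G₁) (b : G₂) (X : Set G₁) (Y : Set G₂) :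
    smulSet ((a, b) : G₁ × G₂) (X ×ˢ Y) = smulSet a X ×ˢ smulSet b Y := by
  ext ⟨x, y⟩
  simp only [mem_smulSet, Set.mem_prod, prod_hmul, Prod.exists]
  constructor
  · rintro ⟨c, d, ⟨hc, hd⟩, hx, hy⟩
    exact ⟨⟨c, hc, hx⟩, ⟨d, hd, hy⟩⟩
  · rintro ⟨⟨c, hc, hx⟩, ⟨d, hd, hy⟩⟩
    exact ⟨c, d, ⟨hc, hd⟩, hx, hy⟩

lemma hPow_prod (a : G₁) (b : G₂) (n : ℕ) :
    hPow ((a, b) : G₁ × G₂) n = hPow a n ×ˢ hPow b n := by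
  induction n with
  | zero => simp [hPow, hProd]
  | succ k ih =>
    cases Nat.eq_zero_or_pos k with
    | inl h0 =>
      subst h0
      ext ⟨x, y⟩
      simp [hPow_one, Prod.ext_iff]
    | inr hk =>
      rw [hPow_succ _ _ hk, hPow_succ _ _ hk, hPow_succ _ _ hk, ih, smulSet_prod]

lemma prod_subset_fst {X A : Set G₁} {Y B : Set G₂} (h : X ×ˢ Y ⊆ A ×ˢ B)
    (hY : Y.Nonempty) : X ⊆ A := by
  obtain ⟨y, hy⟩ := hY
  exact fun x hx => (h (show (x, y) ∈ X ×ˢ Y from ⟨hx, hy⟩)).1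

lemma prod_subset_snd {X A : Set G₁} {Y B : Set G₂} (h : X ×ˢ Y ⊆ A ×ˢ B)
    (hX : X.Nonempty) : Y ⊆ B := by
  obtain ⟨x, hx⟩ := hX
  exact fun y hy => (h (show (x, y) ∈ X ×ˢ Y from ⟨hx, hy⟩)).2

lemma isHyperideal_prod {A₁ : Set G₁} {A₂ : Set G₂} (h₁ : IsHyperideal A₁)
    (h₂ : IsHyperideal A₂) : IsHyperideal (A₁ ×ˢ A₂) := by
  refine ⟨h₁.1.prod h₂.1, ?_, ?_⟩
  · rintro ⟨x₁, x₂⟩ ⟨hx1, hx2⟩ ⟨y₁, y₂⟩ ⟨hy1, hy2⟩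
    exact ⟨h₁.2.1 x₁ hx1 y₁ hy1, h₂.2.1 x₂ hx2 y₂ hy2⟩
  · rintro ⟨r₁, r₂⟩ ⟨x₁, x₂⟩ ⟨hx1, hx2⟩ ⟨z₁, z₂⟩ ⟨hz1, hz2⟩
    exact ⟨h₁.2.2 r₁ x₁ hx1 hz1, h₂.2.2 r₂ x₂ hx2 hz2⟩

lemma rad_prod {A₁ : Set G₁} {A₂ : Set G₂} (h₁ : IsHyperideal A₁) (h₂ : IsHyperideal A₂) :
    rad (A₁ ×ˢ A₂) = rad A₁ ×ˢ rad A₂ := by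
  ext ⟨a, b⟩
  constructor
  · rintro ⟨n, hn, h⟩
    rw [hPow_prod] at h
    exact ⟨⟨n, hn, prod_subset_fst h (hPow_nonempty b hn)⟩,
      ⟨n, hn, prod_subset_snd h (hPow_nonempty a hn)⟩⟩
  · rintro ⟨⟨n₁, hn₁, ha⟩, ⟨n₂, hn₂, hb⟩⟩
    refine ⟨max n₁ n₂, le_trans hn₁ (le_max_left _ _), ?_⟩
    rw [hPow_prod]
    exact Set.prod_mono (hPow_subset_mono h₁ hn₁ (le_max_left _ _) ha)
      (hPow_subset_mono h₂ hn₂ (le_max_right _ _) hb)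

end Prod

end MulHyperring

open MulHyperring in
theorem stronglyQuasiSPrimary_prod {G₁ G₂ : Type*} [MulHyperring G₁] [MulHyperring G₂]
    (A₁ S₁ : Set G₁) (A₂ S₂ : Set G₂) (hA₁ : IsCHyperideal A₁) (hA₂ : IsCHyperideal A₂)
    (hS₁ : IsMCS S₁) (hS₂ : IsMCS S₂) :
    IsStronglyQuasiSPrimary (S₁ ×ˢ S₂) (A₁ ×ˢ A₂) ↔
      (IsStronglyQuasiSPrimary S₂ A₂ ∧ (S₁ ∩ A₁).Nonempty) ∨
      (IsStronglyQuasiSPrimary S₁ A₁ ∧ (S₂ ∩ A₂).Nonempty) := by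
  have hradP : rad (A₁ ×ˢ A₂) = rad A₁ ×ˢ rad A₂ := rad_prod hA₁.1 hA₂.1
  have h0₁ : (0 : G₁) ∈ A₁ := zero_mem_ideal hA₁.1
  have h0₂ : (0 : G₂) ∈ A₂ := zero_mem_ideal hA₂.1
  constructor
  · rintro ⟨hIdeal, hDisj, ⟨t₁, t₂⟩, ⟨ht₁, ht₂⟩, ht⟩
    have hdisj' : (A₁ ∩ S₁) ×ˢ (A₂ ∩ S₂) = ∅ := by
      rw [← Set.prod_inter_prod]; exact hDisj
    obtain ⟨a₁, ha₁⟩ := hA₁.1.1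
    obtain ⟨a₂, ha₂⟩ := hA₂.1.1
    -- apply to (a₁, e) and (e, a₂)
    have hkey : hmul ((a₁, e) : G₁ × G₂) (e, a₂) ⊆ A₁ ×ˢ A₂ := by
      rw [prod_hmul]
      exact Set.prod_mono (hmul_subset_of_left_mem hA₁.1 ha₁ e)
        (hA₂.1.2.2 e a₂ ha₂)
    rcases ht (a₁, e) (e, a₂) hkey with hL | hR
    · -- second component gives t₂ ∈ A₂
      rw [hPow_prod, smulSet_prod] at hL
      have h2 : smulSet t₂ (hPow (e : G₂) 2) ⊆ A₂ :=
        prod_subset_snd hL (smulSet_nonempty t₁ (hPow_nonempty a₁ (by omega)))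
      have heP : (e : G₂) ∈ hPow (e : G₂) 2 := by
        rw [hPow_succ _ 1 le_rfl]
        exact mem_smulSet.mpr ⟨e, rfl, e_mem e⟩
      have ht₂A : t₂ ∈ A₂ := by
        have : hmul t₂ (e : G₂) ⊆ A₂ := fun x hx => h2 (mem_smulSet.mpr ⟨e, heP, hx⟩)
        exact this (by rw [hmul_comm]; exact e_mem t₂)
      have hS₂A₂ : (S₂ ∩ A₂).Nonempty := ⟨t₂, ht₂, ht₂A⟩
      have hA₁S₁ : A₁ ∩ S₁ = ∅ := by
        rcases Set.prod_eq_empty_iff.mp hdisj' with h | h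
        · exact h
        · exact absurd h (Set.nonempty_iff_ne_empty.mp ⟨t₂, ht₂A, ht₂⟩)
      refine Or.inr ⟨⟨hA₁.1, hA₁S₁, t₁, ht₁, ?_⟩, hS₂A₂⟩
      intro u v huv
      have huv' : hmul ((u, (0 : G₂)) : G₁ × G₂) (v, 0) ⊆ A₁ ×ˢ A₂ := by
        rw [prod_hmul]
        exact Set.prod_mono huv (hmul_subset_of_left_mem hA₂.1 h0₂ 0)
      rcases ht (u, 0) (v, 0) huv' with h | h
      · rw [hPow_prod, smulSet_prod] at h
        exact Or.inl (prod_subset_fst h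
          (smulSet_nonempty t₂ (hPow_nonempty (0 : G₂) (by omega))))
      · rw [prod_hmul, hradP] at h
        exact Or.inr (prod_subset_fst h (hmul_nonempty t₂ 0))
    · -- first component gives t₁ ∈ rad A₁, hence S₁ ∩ A₁ nonempty
      rw [prod_hmul, hradP] at hR
      have h1 : hmul t₁ (e : G₁) ⊆ rad A₁ :=
        prod_subset_fst hR (hmul_nonempty t₂ a₂)
      have ht₁rad : t₁ ∈ rad A₁ := h1 (by rw [hmul_comm]; exact e_mem t₁)
      obtain ⟨n, hn, hpow⟩ := ht₁rad
      obtain ⟨x, hxP, hxS⟩ := mcs_pow hS₁ ht₁ n hn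
      have hS₁A₁ : (S₁ ∩ A₁).Nonempty := ⟨x, hxS, hpow hxP⟩
      have hA₂S₂ : A₂ ∩ S₂ = ∅ := by
        rcases Set.prod_eq_empty_iff.mp hdisj' with h | h
        · exact absurd h (Set.nonempty_iff_ne_empty.mp ⟨x, hpow hxP, hxS⟩)
        · exact h
      refine Or.inl ⟨⟨hA₂.1, hA₂S₂, t₂, ht₂, ?_⟩, hS₁A₁⟩
      intro u v huv
      have huv' : hmul (((0 : G₁), u) : G₁ × G₂) (0, v) ⊆ A₁ ×ˢ A₂ := by
        rw [prod_hmul]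
        exact Set.prod_mono (hmul_subset_of_left_mem hA₁.1 h0₁ 0) huv
      rcases ht (0, u) (0, v) huv' with h | h
      · rw [hPow_prod, smulSet_prod] at h
        exact Or.inl (prod_subset_snd h
          (smulSet_nonempty t₁ (hPow_nonempty (0 : G₁) (by omega))))
      · rw [prod_hmul, hradP] at h
        exact Or.inr (prod_subset_snd h (hmul_nonempty t₁ 0))
  · rintro (⟨⟨hI₂, hD₂, t₂, ht₂, ht⟩, ⟨s, hsS, hsA⟩⟩ | ⟨⟨hI₁, hD₁, t₁, ht₁, ht⟩, ⟨s, hsS, hsA⟩⟩)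
    · refine ⟨isHyperideal_prod hA₁.1 hA₂.1, ?_, (s, t₂), ⟨hsS, ht₂⟩, ?_⟩
      · rw [Set.prod_inter_prod, hD₂, Set.prod_empty]
      · rintro ⟨u₁, u₂⟩ ⟨v₁, v₂⟩ huv
        rw [prod_hmul] at huv
        have huv₂ : hmul u₂ v₂ ⊆ A₂ := prod_subset_snd huv (hmul_nonempty u₁ v₁)
        rcases ht u₂ v₂ huv₂ with h | h
        · refine Or.inl ?_
          rw [hPow_prod, smulSet_prod]
          exact Set.prod_mono (smulSet_subset_of_mem hA₁.1 hsA _) h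
        · refine Or.inr ?_
          rw [prod_hmul, hradP]
          exact Set.prod_mono
            (fun x hx => subset_rad (hmul_subset_of_left_mem hA₁.1 hsA v₁ hx)) h
    · refine ⟨isHyperideal_prod hA₁.1 hA₂.1, ?_, (t₁, s), ⟨ht₁, hsS⟩, ?_⟩
      · rw [Set.prod_inter_prod, hD₁, Set.empty_prod]
      · rintro ⟨u₁, u₂⟩ ⟨v₁, v₂⟩ huv
        rw [prod_hmul] at huv
        have huv₁ : hmul u₁ v₁ ⊆ A₁ := prod_subset_fst huv (hmul_nonempty u₂ v₂)
        rcases ht u₁ v₁ huv₁ with h | h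
        · refine Or.inl ?_
          rw [hPow_prod, smulSet_prod]
          exact Set.prod_mono h (smulSet_subset_of_mem hA₂.1 hsA _)
        · refine Or.inr ?_
          rw [prod_hmul, hradP]
          exact Set.prod_mono h
            (fun x hx => subset_rad (hmul_subset_of_left_mem hA₂.1 hsA v₂ hx))
end
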